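/- Let 𝒵, 𝒲₁, 𝒲₂ be finite sets and let P be a joint pmf for (Z, W₁, W₂) such that the marginals P_Z, P_{W₁}, P_{W₂} are strictly positive, W₁ and W₂ are independent (P_{W₁,W₂}(w₁,w₂) = P_{W₁}(w₁)·P_{W₂}(w₂) for all w₁,w₂), and W₁ and W₂ are conditionally independent given Z (P_{W₁,W₂|Z}(w₁,w₂|z) = P_{W₁|Z}(w₁|z)·P_{W₂|Z}(w₂|z) for all z,w₁,w₂). Then for every w₁ ∈ 𝒲₁ and w₂ ∈ 𝒲₂: Σ_z (P_{Z|W₁}(z|w₁) − P_Z(z))·(P_{Z|W₂}(z|w₂) − P_Z(z))/P_Z(z) = 0. -/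

import Mathlib

theorem stmt_10 {Z W₁ W₂ : Type*} [Fintype Z] [Fintype W₁] [Fintype W₂]
    (P : Z → W₁ → W₂ → ℝ)
    (hP : ∀ z w₁ w₂, 0 ≤ P z w₁ w₂)
    (hsum : ∑ z, ∑ w₁, ∑ w₂, P z w₁ w₂ = 1)
    (PZ : Z → ℝ) (hPZ : ∀ z, PZ z = ∑ w₁, ∑ w₂, P z w₁ w₂)
    (PW₁ : W₁ → ℝ) (hPW₁ : ∀ w₁, PW₁ w₁ = ∑ z, ∑ w₂, P z w₁ w₂)
    (PW₂ : W₂ → ℝ) (hPW₂ : ∀ w₂, PW₂ w₂ = ∑ z, ∑ w₁, P z w₁ w₂)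
    (hPZpos : ∀ z, 0 < PZ z) (hPW₁pos : ∀ w₁, 0 < PW₁ w₁) (hPW₂pos : ∀ w₂, 0 < PW₂ w₂)
    (hIndep : ∀ w₁ w₂, ∑ z, P z w₁ w₂ = PW₁ w₁ * PW₂ w₂)
    (hCondIndep : ∀ z w₁ w₂,
        P z w₁ w₂ * PZ z = (∑ w₂', P z w₁ w₂') * (∑ w₁', P z w₁' w₂)) :
    ∀ w₁ w₂, ∑ z, ((∑ w₂', P z w₁ w₂') / PW₁ w₁ - PZ z) *
        ((∑ w₁', P z w₁' w₂) / PW₂ w₂ - PZ z) / PZ z = 0 := by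
  intro w₁ w₂
  have hZne : ∀ z, PZ z ≠ 0 := fun z => (hPZpos z).ne'
  have h1ne : PW₁ w₁ ≠ 0 := (hPW₁pos w₁).ne'
  have h2ne : PW₂ w₂ ≠ 0 := (hPW₂pos w₂).ne'
  have h1 : ∑ z, (∑ w₂', P z w₁ w₂') * (∑ w₁', P z w₁' w₂) / PZ z
      = PW₁ w₁ * PW₂ w₂ := by
    rw [← hIndep]
    refine Finset.sum_congr rfl fun z _ => ?_
    rw [← hCondIndep, mul_div_assoc, div_self (hZne z), mul_one]
  have h2 : ∑ z, ∑ w₂', P z w₁ w₂' = PW₁ w₁ := (hPW₁ w₁).symm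
  have h3 : ∑ z, ∑ w₁', P z w₁' w₂ = PW₂ w₂ := (hPW₂ w₂).symm
  have h4 : ∑ z, PZ z = 1 := by
    rw [← hsum]; exact Finset.sum_congr rfl fun z _ => hPZ z
  have key : ∀ z : Z, ((∑ w₂', P z w₁ w₂') / PW₁ w₁ - PZ z) *
      ((∑ w₁', P z w₁' w₂) / PW₂ w₂ - PZ z) / PZ z
      = ((∑ w₂', P z w₁ w₂') * (∑ w₁', P z w₁' w₂) / PZ z) / (PW₁ w₁ * PW₂ w₂)
        - (∑ w₂', P z w₁ w₂') / PW₁ w₁ - (∑ w₁', P z w₁' w₂) / PW₂ w₂ + PZ z := by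
    intro z
    have hp := hZne z
    set a := ∑ w₂', P z w₁ w₂' with ha
    set b := ∑ w₁', P z w₁' w₂ with hb
    field_simp
    ring
  rw [Finset.sum_congr rfl fun z _ => key z]
  rw [Finset.sum_add_distrib, Finset.sum_sub_distrib, Finset.sum_sub_distrib,
    ← Finset.sum_div, ← Finset.sum_div, ← Finset.sum_div, h1, h2, h3, h4]
  field_simp
  norm_num
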